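/- The Fomin–Kirillov algebra FK(3) over a field k of characteristic ≠ 2,3 has dimension 12 as a k-vector space, with basis {1, a, b, c, ab, bc, ba, ac, aba, abc, bac, abac}. -/

import Mathlib

/-!
The Fomin–Kirillov algebra `FK(3)` over a field `k` of characteristic `≠ 2,3` is the quotient of
the free algebra on three generators `a, b, c` by the two-sided ideal generated by
`a², b², c², ab + bc + ca, ba + ac + cb`.  We state that it has dimension 12 over `k`,
with basis `{1, a, b, c, ab, bc, ba, ac, aba, abc, bac, abac}`.
-/

open FreeAlgebra

/-- The defining relations of the Fomin–Kirillov algebra `FK(3)`. -/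
inductive FKRel (k : Type) [Field k] : FreeAlgebra k (Fin 3) → FreeAlgebra k (Fin 3) → Prop
  | sq_a : FKRel k (ι k (0 : Fin 3) * ι k (0 : Fin 3)) 0
  | sq_b : FKRel k (ι k (1 : Fin 3) * ι k (1 : Fin 3)) 0
  | sq_c : FKRel k (ι k (2 : Fin 3) * ι k (2 : Fin 3)) 0
  | rel1 : FKRel k (ι k (0 : Fin 3) * ι k (1 : Fin 3) + ι k (1 : Fin 3) * ι k (2 : Fin 3) +
      ι k (2 : Fin 3) * ι k (0 : Fin 3)) 0
  | rel2 : FKRel k (ι k (1 : Fin 3) * ι k (0 : Fin 3) + ι k (0 : Fin 3) * ι k (2 : Fin 3) +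
      ι k (2 : Fin 3) * ι k (1 : Fin 3)) 0

/-- The Fomin–Kirillov algebra on three generators. -/
abbrev FK3 (k : Type) [Field k] := RingQuot (FKRel k)

variable (k : Type) [Field k]

/-- The generator `a` of `FK(3)`. -/
noncomputable def FKa : FK3 k := RingQuot.mkAlgHom k (FKRel k) (ι k (0 : Fin 3))
/-- The generator `b` of `FK(3)`. -/
noncomputable def FKb : FK3 k := RingQuot.mkAlgHom k (FKRel k) (ι k (1 : Fin 3))
/-- The generator `c` of `FK(3)`. -/
noncomputable def FKc : FK3 k := RingQuot.mkAlgHom k (FKRel k) (ι k (2 : Fin 3))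

/-- The family `1, a, b, c, ab, bc, ba, ac, aba, abc, bac, abac` in `FK(3)`. -/
noncomputable def fkBasisFam : Fin 12 → FK3 k :=
  ![1, FKa k, FKb k, FKc k,
    FKa k * FKb k, FKb k * FKc k, FKb k * FKa k, FKa k * FKc k,
    FKa k * FKb k * FKa k, FKa k * FKb k * FKc k, FKb k * FKa k * FKc k,
    FKa k * FKb k * FKa k * FKc k]


/-! ### Auxiliary material -/

section Identities
set_option linter.unusedSectionVars false
variable {R : Type*} [Ring R] (a b c : R) (haa : a * a = 0) (hbb : b * b = 0)
  (hcc : c * c = 0) (r1 : a * b + b * c + c * a = 0) (r2 : b * a + a * c + c * b = 0)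
include haa hbb hcc r1 r2

theorem mul_a_0 : a * 1 = a := by
  have key : a * 1 - (a) = 0 := by noncomm_ring
  simp -failIfUnchanged only [haa, hbb, hcc, r1, r2, mul_zero, zero_mul, add_zero, zero_add, neg_zero,
    sub_zero] at key
  first | exact key | exact sub_eq_zero.mp key | simp only [haa, hbb, hcc, r1, r2]
theorem mul_a_1 : a * (a) = 0 := by
  have key : a * (a) - (0) = (a * a) := by noncomm_ring
  simp only [haa, hbb, hcc, r1, r2, mul_zero, zero_mul, add_zero, zero_add, neg_zero,
    sub_zero] at key
  first | exact key | exact sub_eq_zero.mp key | simp only [haa, hbb, hcc, r1, r2]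
theorem mul_a_2 : a * (b) = a * b := by
  have key : a * (b) - (a * b) = 0 := by noncomm_ring
  simp -failIfUnchanged only [haa, hbb, hcc, r1, r2, mul_zero, zero_mul, add_zero, zero_add, neg_zero,
    sub_zero] at key
  first | exact key | exact sub_eq_zero.mp key | simp only [haa, hbb, hcc, r1, r2]
theorem mul_a_3 : a * (c) = a * c := by
  have key : a * (c) - (a * c) = 0 := by noncomm_ring
  simp -failIfUnchanged only [haa, hbb, hcc, r1, r2, mul_zero, zero_mul, add_zero, zero_add, neg_zero,
    sub_zero] at key
  first | exact key | exact sub_eq_zero.mp key | simp only [haa, hbb, hcc, r1, r2]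
theorem mul_a_4 : a * (a * b) = 0 := by
  have key : a * (a * b) - (0) = (a * a) * b := by noncomm_ring
  simp only [haa, hbb, hcc, r1, r2, mul_zero, zero_mul, add_zero, zero_add, neg_zero,
    sub_zero] at key
  first | exact key | exact sub_eq_zero.mp key | simp only [haa, hbb, hcc, r1, r2]
theorem mul_a_5 : a * (b * c) = a * b * c := by
  have key : a * (b * c) - (a * b * c) = 0 := by noncomm_ring
  simp -failIfUnchanged only [haa, hbb, hcc, r1, r2, mul_zero, zero_mul, add_zero, zero_add, neg_zero,
    sub_zero] at key
  first | exact key | exact sub_eq_zero.mp key | simp only [haa, hbb, hcc, r1, r2]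
theorem mul_a_6 : a * (b * a) = a * b * a := by
  have key : a * (b * a) - (a * b * a) = 0 := by noncomm_ring
  simp -failIfUnchanged only [haa, hbb, hcc, r1, r2, mul_zero, zero_mul, add_zero, zero_add, neg_zero,
    sub_zero] at key
  first | exact key | exact sub_eq_zero.mp key | simp only [haa, hbb, hcc, r1, r2]
theorem mul_a_7 : a * (a * c) = 0 := by
  have key : a * (a * c) - (0) = (a * a) * c := by noncomm_ring
  simp only [haa, hbb, hcc, r1, r2, mul_zero, zero_mul, add_zero, zero_add, neg_zero,
    sub_zero] at key
  first | exact key | exact sub_eq_zero.mp key | simp only [haa, hbb, hcc, r1, r2]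
theorem mul_a_8 : a * (a * b * a) = 0 := by
  have key : a * (a * b * a) - (0) = (a * a) * b * a := by noncomm_ring
  simp only [haa, hbb, hcc, r1, r2, mul_zero, zero_mul, add_zero, zero_add, neg_zero,
    sub_zero] at key
  first | exact key | exact sub_eq_zero.mp key | simp only [haa, hbb, hcc, r1, r2]
theorem mul_a_9 : a * (a * b * c) = 0 := by
  have key : a * (a * b * c) - (0) = (a * a) * b * c := by noncomm_ring
  simp only [haa, hbb, hcc, r1, r2, mul_zero, zero_mul, add_zero, zero_add, neg_zero,
    sub_zero] at key
  first | exact key | exact sub_eq_zero.mp key | simp only [haa, hbb, hcc, r1, r2]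
theorem mul_a_10 : a * (b * a * c) = a * b * a * c := by
  have key : a * (b * a * c) - (a * b * a * c) = 0 := by noncomm_ring
  simp -failIfUnchanged only [haa, hbb, hcc, r1, r2, mul_zero, zero_mul, add_zero, zero_add, neg_zero,
    sub_zero] at key
  first | exact key | exact sub_eq_zero.mp key | simp only [haa, hbb, hcc, r1, r2]
theorem mul_a_11 : a * (a * b * a * c) = 0 := by
  have key : a * (a * b * a * c) - (0) = (a * a) * b * a * c := by noncomm_ring
  simp only [haa, hbb, hcc, r1, r2, mul_zero, zero_mul, add_zero, zero_add, neg_zero,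
    sub_zero] at key
  first | exact key | exact sub_eq_zero.mp key | simp only [haa, hbb, hcc, r1, r2]
theorem mul_b_0 : b * 1 = b := by
  have key : b * 1 - (b) = 0 := by noncomm_ring
  simp -failIfUnchanged only [haa, hbb, hcc, r1, r2, mul_zero, zero_mul, add_zero, zero_add, neg_zero,
    sub_zero] at key
  first | exact key | exact sub_eq_zero.mp key | simp only [haa, hbb, hcc, r1, r2]
theorem mul_b_1 : b * (a) = b * a := by
  have key : b * (a) - (b * a) = 0 := by noncomm_ring
  simp -failIfUnchanged only [haa, hbb, hcc, r1, r2, mul_zero, zero_mul, add_zero, zero_add, neg_zero,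
    sub_zero] at key
  first | exact key | exact sub_eq_zero.mp key | simp only [haa, hbb, hcc, r1, r2]
theorem mul_b_2 : b * (b) = 0 := by
  have key : b * (b) - (0) = (b * b) := by noncomm_ring
  simp only [haa, hbb, hcc, r1, r2, mul_zero, zero_mul, add_zero, zero_add, neg_zero,
    sub_zero] at key
  first | exact key | exact sub_eq_zero.mp key | simp only [haa, hbb, hcc, r1, r2]
theorem mul_b_3 : b * (c) = b * c := by
  have key : b * (c) - (b * c) = 0 := by noncomm_ring
  simp -failIfUnchanged only [haa, hbb, hcc, r1, r2, mul_zero, zero_mul, add_zero, zero_add, neg_zero,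
    sub_zero] at key
  first | exact key | exact sub_eq_zero.mp key | simp only [haa, hbb, hcc, r1, r2]
theorem mul_b_4 : b * (a * b) = a * b * a := by
  have key : b * (a * b) - (a * b * a) = (b * a + a * c + c * b) * b - a * (b * a + a * c + c * b) - c * (b * b) + (a * a) * c := by noncomm_ring
  simp only [haa, hbb, hcc, r1, r2, mul_zero, zero_mul, add_zero, zero_add, neg_zero,
    sub_zero] at key
  first | exact key | exact sub_eq_zero.mp key | simp only [haa, hbb, hcc, r1, r2]
theorem mul_b_5 : b * (b * c) = 0 := by
  have key : b * (b * c) - (0) = (b * b) * c := by noncomm_ring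
  simp only [haa, hbb, hcc, r1, r2, mul_zero, zero_mul, add_zero, zero_add, neg_zero,
    sub_zero] at key
  first | exact key | exact sub_eq_zero.mp key | simp only [haa, hbb, hcc, r1, r2]
theorem mul_b_6 : b * (b * a) = 0 := by
  have key : b * (b * a) - (0) = (b * b) * a := by noncomm_ring
  simp only [haa, hbb, hcc, r1, r2, mul_zero, zero_mul, add_zero, zero_add, neg_zero,
    sub_zero] at key
  first | exact key | exact sub_eq_zero.mp key | simp only [haa, hbb, hcc, r1, r2]
theorem mul_b_7 : b * (a * c) = b * a * c := by
  have key : b * (a * c) - (b * a * c) = 0 := by noncomm_ring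
  simp -failIfUnchanged only [haa, hbb, hcc, r1, r2, mul_zero, zero_mul, add_zero, zero_add, neg_zero,
    sub_zero] at key
  first | exact key | exact sub_eq_zero.mp key | simp only [haa, hbb, hcc, r1, r2]
theorem mul_b_8 : b * (a * b * a) = 0 := by
  have key : b * (a * b * a) - (0) = (b * a + a * c + c * b) * b * a - a * (b * a + a * c + c * b) * a - c * (b * b) * a + (a * a) * c * a + a * b * (a * a) := by noncomm_ring
  simp only [haa, hbb, hcc, r1, r2, mul_zero, zero_mul, add_zero, zero_add, neg_zero,
    sub_zero] at key
  first | exact key | exact sub_eq_zero.mp key | simp only [haa, hbb, hcc, r1, r2]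
theorem mul_b_9 : b * (a * b * c) = a * b * a * c := by
  have key : b * (a * b * c) - (a * b * a * c) = (b * a + a * c + c * b) * b * c - a * (b * a + a * c + c * b) * c - c * (b * b) * c + (a * a) * c * c := by noncomm_ring
  simp only [haa, hbb, hcc, r1, r2, mul_zero, zero_mul, add_zero, zero_add, neg_zero,
    sub_zero] at key
  first | exact key | exact sub_eq_zero.mp key | simp only [haa, hbb, hcc, r1, r2]
theorem mul_b_10 : b * (b * a * c) = 0 := by
  have key : b * (b * a * c) - (0) = (b * b) * a * c := by noncomm_ring
  simp only [haa, hbb, hcc, r1, r2, mul_zero, zero_mul, add_zero, zero_add, neg_zero,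
    sub_zero] at key
  first | exact key | exact sub_eq_zero.mp key | simp only [haa, hbb, hcc, r1, r2]
theorem mul_b_11 : b * (a * b * a * c) = 0 := by
  have key : b * (a * b * a * c) - (0) = (b * a + a * c + c * b) * b * a * c - a * (b * a + a * c + c * b) * a * c - c * (b * b) * a * c + (a * a) * c * a * c + a * b * (a * a) * c := by noncomm_ring
  simp only [haa, hbb, hcc, r1, r2, mul_zero, zero_mul, add_zero, zero_add, neg_zero,
    sub_zero] at key
  first | exact key | exact sub_eq_zero.mp key | simp only [haa, hbb, hcc, r1, r2]
theorem mul_c_0 : c * 1 = c := by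
  have key : c * 1 - (c) = 0 := by noncomm_ring
  simp -failIfUnchanged only [haa, hbb, hcc, r1, r2, mul_zero, zero_mul, add_zero, zero_add, neg_zero,
    sub_zero] at key
  first | exact key | exact sub_eq_zero.mp key | simp only [haa, hbb, hcc, r1, r2]
theorem mul_c_1 : c * (a) = -(a * b) - b * c := by
  have key : c * (a) - (-(a * b) - b * c) = (a * b + b * c + c * a) := by noncomm_ring
  simp only [haa, hbb, hcc, r1, r2, mul_zero, zero_mul, add_zero, zero_add, neg_zero,
    sub_zero] at key
  first | exact key | exact sub_eq_zero.mp key | simp only [haa, hbb, hcc, r1, r2]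
theorem mul_c_2 : c * (b) = -(b * a) - a * c := by
  have key : c * (b) - (-(b * a) - a * c) = (b * a + a * c + c * b) := by noncomm_ring
  simp only [haa, hbb, hcc, r1, r2, mul_zero, zero_mul, add_zero, zero_add, neg_zero,
    sub_zero] at key
  first | exact key | exact sub_eq_zero.mp key | simp only [haa, hbb, hcc, r1, r2]
theorem mul_c_3 : c * (c) = 0 := by
  have key : c * (c) - (0) = (c * c) := by noncomm_ring
  simp only [haa, hbb, hcc, r1, r2, mul_zero, zero_mul, add_zero, zero_add, neg_zero,
    sub_zero] at key
  first | exact key | exact sub_eq_zero.mp key | simp only [haa, hbb, hcc, r1, r2]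
theorem mul_c_4 : c * (a * b) = b * a * c := by
  have key : c * (a * b) - (b * a * c) = (a * b + b * c + c * a) * b - a * (b * b) - b * (b * a + a * c + c * b) + (b * b) * a := by noncomm_ring
  simp only [haa, hbb, hcc, r1, r2, mul_zero, zero_mul, add_zero, zero_add, neg_zero,
    sub_zero] at key
  first | exact key | exact sub_eq_zero.mp key | simp only [haa, hbb, hcc, r1, r2]
theorem mul_c_5 : c * (b * c) = -(b * a * c) := by
  have key : c * (b * c) - (-(b * a * c)) = (b * a + a * c + c * b) * c - a * (c * c) := by noncomm_ring
  simp only [haa, hbb, hcc, r1, r2, mul_zero, zero_mul, add_zero, zero_add, neg_zero,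
    sub_zero] at key
  first | exact key | exact sub_eq_zero.mp key | simp only [haa, hbb, hcc, r1, r2]
theorem mul_c_6 : c * (b * a) = a * b * c := by
  have key : c * (b * a) - (a * b * c) = (b * a + a * c + c * b) * a - b * (a * a) - a * (a * b + b * c + c * a) + (a * a) * b := by noncomm_ring
  simp only [haa, hbb, hcc, r1, r2, mul_zero, zero_mul, add_zero, zero_add, neg_zero,
    sub_zero] at key
  first | exact key | exact sub_eq_zero.mp key | simp only [haa, hbb, hcc, r1, r2]
theorem mul_c_7 : c * (a * c) = -(a * b * c) := by
  have key : c * (a * c) - (-(a * b * c)) = (a * b + b * c + c * a) * c - b * (c * c) := by noncomm_ring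
  simp only [haa, hbb, hcc, r1, r2, mul_zero, zero_mul, add_zero, zero_add, neg_zero,
    sub_zero] at key
  first | exact key | exact sub_eq_zero.mp key | simp only [haa, hbb, hcc, r1, r2]
theorem mul_c_8 : c * (a * b * a) = -(a * b * a * c) := by
  have key : c * (a * b * a) - (-(a * b * a * c)) = (a * b + b * c + c * a) * b * a - a * (b * b) * a - b * (b * a + a * c + c * b) * a + b * b * (a * a) + b * a * (a * b + b * c + c * a) - b * (a * a) * b - (b * a + a * c + c * b) * b * c + a * (b * a + a * c + c * b) * c + c * (b * b) * c - (a * a) * c * c := by noncomm_ring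
  simp only [haa, hbb, hcc, r1, r2, mul_zero, zero_mul, add_zero, zero_add, neg_zero,
    sub_zero] at key
  first | exact key | exact sub_eq_zero.mp key | simp only [haa, hbb, hcc, r1, r2]
theorem mul_c_9 : c * (a * b * c) = 0 := by
  have key : c * (a * b * c) - (0) = (a * b + b * c + c * a) * b * c - a * (b * b) * c - b * (b * a + a * c + c * b) * c + (b * b) * a * c + b * a * (c * c) := by noncomm_ring
  simp only [haa, hbb, hcc, r1, r2, mul_zero, zero_mul, add_zero, zero_add, neg_zero,
    sub_zero] at key
  first | exact key | exact sub_eq_zero.mp key | simp only [haa, hbb, hcc, r1, r2]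
theorem mul_c_10 : c * (b * a * c) = 0 := by
  have key : c * (b * a * c) - (0) = (b * a + a * c + c * b) * a * c - b * (a * a) * c - a * (a * b + b * c + c * a) * c + (a * a) * b * c + a * b * (c * c) := by noncomm_ring
  simp only [haa, hbb, hcc, r1, r2, mul_zero, zero_mul, add_zero, zero_add, neg_zero,
    sub_zero] at key
  first | exact key | exact sub_eq_zero.mp key | simp only [haa, hbb, hcc, r1, r2]
theorem mul_c_11 : c * (a * b * a * c) = 0 := by
  have key : c * (a * b * a * c) - (0) = (a * b + b * c + c * a) * b * a * c - a * (b * b) * a * c - b * (b * a + a * c + c * b) * a * c + b * b * (a * a) * c + b * a * (a * b + b * c + c * a) * c - b * (a * a) * b * c - b * a * b * (c * c) := by noncomm_ring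
  simp only [haa, hbb, hcc, r1, r2, mul_zero, zero_mul, add_zero, zero_add, neg_zero,
    sub_zero] at key
  first | exact key | exact sub_eq_zero.mp key | simp only [haa, hbb, hcc, r1, r2]

end Identities

/-- The relations in `FK3`. -/
theorem fk_haa : FKa k * FKa k = 0 := by
  simpa [FKa, map_mul] using RingQuot.mkAlgHom_rel k (FKRel.sq_a (k := k))
theorem fk_hbb : FKb k * FKb k = 0 := by
  simpa [FKb, map_mul] using RingQuot.mkAlgHom_rel k (FKRel.sq_b (k := k))
theorem fk_hcc : FKc k * FKc k = 0 := by
  simpa [FKc, map_mul] using RingQuot.mkAlgHom_rel k (FKRel.sq_c (k := k))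
theorem fk_r1 : FKa k * FKb k + FKb k * FKc k + FKc k * FKa k = 0 := by
  simpa [FKa, FKb, FKc, map_mul, map_add] using RingQuot.mkAlgHom_rel k (FKRel.rel1 (k := k))
theorem fk_r2 : FKb k * FKa k + FKa k * FKc k + FKc k * FKb k = 0 := by
  simpa [FKa, FKb, FKc, map_mul, map_add] using RingQuot.mkAlgHom_rel k (FKRel.rel2 (k := k))

theorem mem_fam (i : Fin 12) :
    fkBasisFam k i ∈ Submodule.span k (Set.range (fkBasisFam k)) :=
  Submodule.subset_span ⟨i, rfl⟩

theorem mul_a_fam (i : Fin 12) :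
    FKa k * fkBasisFam k i ∈ Submodule.span k (Set.range (fkBasisFam k)) := by
  fin_cases i
  · show FKa k * (1 : FK3 k) ∈ Submodule.span k (Set.range (fkBasisFam k))
    rw [mul_a_0 (FKa k) (FKb k) (FKc k) (fk_haa k) (fk_hbb k) (fk_hcc k) (fk_r1 k) (fk_r2 k)]
    exact mem_fam k 1
  · show FKa k * FKa k ∈ Submodule.span k (Set.range (fkBasisFam k))
    rw [mul_a_1 (FKa k) (FKb k) (FKc k) (fk_haa k) (fk_hbb k) (fk_hcc k) (fk_r1 k) (fk_r2 k)]
    exact Submodule.zero_mem _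
  · show FKa k * FKb k ∈ Submodule.span k (Set.range (fkBasisFam k))
    rw [mul_a_2 (FKa k) (FKb k) (FKc k) (fk_haa k) (fk_hbb k) (fk_hcc k) (fk_r1 k) (fk_r2 k)]
    exact mem_fam k 4
  · show FKa k * FKc k ∈ Submodule.span k (Set.range (fkBasisFam k))
    rw [mul_a_3 (FKa k) (FKb k) (FKc k) (fk_haa k) (fk_hbb k) (fk_hcc k) (fk_r1 k) (fk_r2 k)]
    exact mem_fam k 7
  · show FKa k * (FKa k * FKb k) ∈ Submodule.span k (Set.range (fkBasisFam k))
    rw [mul_a_4 (FKa k) (FKb k) (FKc k) (fk_haa k) (fk_hbb k) (fk_hcc k) (fk_r1 k) (fk_r2 k)]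
    exact Submodule.zero_mem _
  · show FKa k * (FKb k * FKc k) ∈ Submodule.span k (Set.range (fkBasisFam k))
    rw [mul_a_5 (FKa k) (FKb k) (FKc k) (fk_haa k) (fk_hbb k) (fk_hcc k) (fk_r1 k) (fk_r2 k)]
    exact mem_fam k 9
  · show FKa k * (FKb k * FKa k) ∈ Submodule.span k (Set.range (fkBasisFam k))
    rw [mul_a_6 (FKa k) (FKb k) (FKc k) (fk_haa k) (fk_hbb k) (fk_hcc k) (fk_r1 k) (fk_r2 k)]
    exact mem_fam k 8
  · show FKa k * (FKa k * FKc k) ∈ Submodule.span k (Set.range (fkBasisFam k))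
    rw [mul_a_7 (FKa k) (FKb k) (FKc k) (fk_haa k) (fk_hbb k) (fk_hcc k) (fk_r1 k) (fk_r2 k)]
    exact Submodule.zero_mem _
  · show FKa k * (FKa k * FKb k * FKa k) ∈ Submodule.span k (Set.range (fkBasisFam k))
    rw [mul_a_8 (FKa k) (FKb k) (FKc k) (fk_haa k) (fk_hbb k) (fk_hcc k) (fk_r1 k) (fk_r2 k)]
    exact Submodule.zero_mem _
  · show FKa k * (FKa k * FKb k * FKc k) ∈ Submodule.span k (Set.range (fkBasisFam k))
    rw [mul_a_9 (FKa k) (FKb k) (FKc k) (fk_haa k) (fk_hbb k) (fk_hcc k) (fk_r1 k) (fk_r2 k)]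
    exact Submodule.zero_mem _
  · show FKa k * (FKb k * FKa k * FKc k) ∈ Submodule.span k (Set.range (fkBasisFam k))
    rw [mul_a_10 (FKa k) (FKb k) (FKc k) (fk_haa k) (fk_hbb k) (fk_hcc k) (fk_r1 k) (fk_r2 k)]
    exact mem_fam k 11
  · show FKa k * (FKa k * FKb k * FKa k * FKc k) ∈ Submodule.span k (Set.range (fkBasisFam k))
    rw [mul_a_11 (FKa k) (FKb k) (FKc k) (fk_haa k) (fk_hbb k) (fk_hcc k) (fk_r1 k) (fk_r2 k)]
    exact Submodule.zero_mem _
theorem mul_b_fam (i : Fin 12) :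
    FKb k * fkBasisFam k i ∈ Submodule.span k (Set.range (fkBasisFam k)) := by
  fin_cases i
  · show FKb k * (1 : FK3 k) ∈ Submodule.span k (Set.range (fkBasisFam k))
    rw [mul_b_0 (FKa k) (FKb k) (FKc k) (fk_haa k) (fk_hbb k) (fk_hcc k) (fk_r1 k) (fk_r2 k)]
    exact mem_fam k 2
  · show FKb k * FKa k ∈ Submodule.span k (Set.range (fkBasisFam k))
    rw [mul_b_1 (FKa k) (FKb k) (FKc k) (fk_haa k) (fk_hbb k) (fk_hcc k) (fk_r1 k) (fk_r2 k)]
    exact mem_fam k 6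
  · show FKb k * FKb k ∈ Submodule.span k (Set.range (fkBasisFam k))
    rw [mul_b_2 (FKa k) (FKb k) (FKc k) (fk_haa k) (fk_hbb k) (fk_hcc k) (fk_r1 k) (fk_r2 k)]
    exact Submodule.zero_mem _
  · show FKb k * FKc k ∈ Submodule.span k (Set.range (fkBasisFam k))
    rw [mul_b_3 (FKa k) (FKb k) (FKc k) (fk_haa k) (fk_hbb k) (fk_hcc k) (fk_r1 k) (fk_r2 k)]
    exact mem_fam k 5
  · show FKb k * (FKa k * FKb k) ∈ Submodule.span k (Set.range (fkBasisFam k))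
    rw [mul_b_4 (FKa k) (FKb k) (FKc k) (fk_haa k) (fk_hbb k) (fk_hcc k) (fk_r1 k) (fk_r2 k)]
    exact mem_fam k 8
  · show FKb k * (FKb k * FKc k) ∈ Submodule.span k (Set.range (fkBasisFam k))
    rw [mul_b_5 (FKa k) (FKb k) (FKc k) (fk_haa k) (fk_hbb k) (fk_hcc k) (fk_r1 k) (fk_r2 k)]
    exact Submodule.zero_mem _
  · show FKb k * (FKb k * FKa k) ∈ Submodule.span k (Set.range (fkBasisFam k))
    rw [mul_b_6 (FKa k) (FKb k) (FKc k) (fk_haa k) (fk_hbb k) (fk_hcc k) (fk_r1 k) (fk_r2 k)]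
    exact Submodule.zero_mem _
  · show FKb k * (FKa k * FKc k) ∈ Submodule.span k (Set.range (fkBasisFam k))
    rw [mul_b_7 (FKa k) (FKb k) (FKc k) (fk_haa k) (fk_hbb k) (fk_hcc k) (fk_r1 k) (fk_r2 k)]
    exact mem_fam k 10
  · show FKb k * (FKa k * FKb k * FKa k) ∈ Submodule.span k (Set.range (fkBasisFam k))
    rw [mul_b_8 (FKa k) (FKb k) (FKc k) (fk_haa k) (fk_hbb k) (fk_hcc k) (fk_r1 k) (fk_r2 k)]
    exact Submodule.zero_mem _
  · show FKb k * (FKa k * FKb k * FKc k) ∈ Submodule.span k (Set.range (fkBasisFam k))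
    rw [mul_b_9 (FKa k) (FKb k) (FKc k) (fk_haa k) (fk_hbb k) (fk_hcc k) (fk_r1 k) (fk_r2 k)]
    exact mem_fam k 11
  · show FKb k * (FKb k * FKa k * FKc k) ∈ Submodule.span k (Set.range (fkBasisFam k))
    rw [mul_b_10 (FKa k) (FKb k) (FKc k) (fk_haa k) (fk_hbb k) (fk_hcc k) (fk_r1 k) (fk_r2 k)]
    exact Submodule.zero_mem _
  · show FKb k * (FKa k * FKb k * FKa k * FKc k) ∈ Submodule.span k (Set.range (fkBasisFam k))
    rw [mul_b_11 (FKa k) (FKb k) (FKc k) (fk_haa k) (fk_hbb k) (fk_hcc k) (fk_r1 k) (fk_r2 k)]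
    exact Submodule.zero_mem _
theorem mul_c_fam (i : Fin 12) :
    FKc k * fkBasisFam k i ∈ Submodule.span k (Set.range (fkBasisFam k)) := by
  fin_cases i
  · show FKc k * (1 : FK3 k) ∈ Submodule.span k (Set.range (fkBasisFam k))
    rw [mul_c_0 (FKa k) (FKb k) (FKc k) (fk_haa k) (fk_hbb k) (fk_hcc k) (fk_r1 k) (fk_r2 k)]
    exact mem_fam k 3
  · show FKc k * FKa k ∈ Submodule.span k (Set.range (fkBasisFam k))
    rw [mul_c_1 (FKa k) (FKb k) (FKc k) (fk_haa k) (fk_hbb k) (fk_hcc k) (fk_r1 k) (fk_r2 k)]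
    exact Submodule.sub_mem _ (Submodule.neg_mem _ (mem_fam k 4)) (mem_fam k 5)
  · show FKc k * FKb k ∈ Submodule.span k (Set.range (fkBasisFam k))
    rw [mul_c_2 (FKa k) (FKb k) (FKc k) (fk_haa k) (fk_hbb k) (fk_hcc k) (fk_r1 k) (fk_r2 k)]
    exact Submodule.sub_mem _ (Submodule.neg_mem _ (mem_fam k 6)) (mem_fam k 7)
  · show FKc k * FKc k ∈ Submodule.span k (Set.range (fkBasisFam k))
    rw [mul_c_3 (FKa k) (FKb k) (FKc k) (fk_haa k) (fk_hbb k) (fk_hcc k) (fk_r1 k) (fk_r2 k)]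
    exact Submodule.zero_mem _
  · show FKc k * (FKa k * FKb k) ∈ Submodule.span k (Set.range (fkBasisFam k))
    rw [mul_c_4 (FKa k) (FKb k) (FKc k) (fk_haa k) (fk_hbb k) (fk_hcc k) (fk_r1 k) (fk_r2 k)]
    exact mem_fam k 10
  · show FKc k * (FKb k * FKc k) ∈ Submodule.span k (Set.range (fkBasisFam k))
    rw [mul_c_5 (FKa k) (FKb k) (FKc k) (fk_haa k) (fk_hbb k) (fk_hcc k) (fk_r1 k) (fk_r2 k)]
    exact Submodule.neg_mem _ (mem_fam k 10)
  · show FKc k * (FKb k * FKa k) ∈ Submodule.span k (Set.range (fkBasisFam k))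
    rw [mul_c_6 (FKa k) (FKb k) (FKc k) (fk_haa k) (fk_hbb k) (fk_hcc k) (fk_r1 k) (fk_r2 k)]
    exact mem_fam k 9
  · show FKc k * (FKa k * FKc k) ∈ Submodule.span k (Set.range (fkBasisFam k))
    rw [mul_c_7 (FKa k) (FKb k) (FKc k) (fk_haa k) (fk_hbb k) (fk_hcc k) (fk_r1 k) (fk_r2 k)]
    exact Submodule.neg_mem _ (mem_fam k 9)
  · show FKc k * (FKa k * FKb k * FKa k) ∈ Submodule.span k (Set.range (fkBasisFam k))
    rw [mul_c_8 (FKa k) (FKb k) (FKc k) (fk_haa k) (fk_hbb k) (fk_hcc k) (fk_r1 k) (fk_r2 k)]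
    exact Submodule.neg_mem _ (mem_fam k 11)
  · show FKc k * (FKa k * FKb k * FKc k) ∈ Submodule.span k (Set.range (fkBasisFam k))
    rw [mul_c_9 (FKa k) (FKb k) (FKc k) (fk_haa k) (fk_hbb k) (fk_hcc k) (fk_r1 k) (fk_r2 k)]
    exact Submodule.zero_mem _
  · show FKc k * (FKb k * FKa k * FKc k) ∈ Submodule.span k (Set.range (fkBasisFam k))
    rw [mul_c_10 (FKa k) (FKb k) (FKc k) (fk_haa k) (fk_hbb k) (fk_hcc k) (fk_r1 k) (fk_r2 k)]
    exact Submodule.zero_mem _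
  · show FKc k * (FKa k * FKb k * FKa k * FKc k) ∈ Submodule.span k (Set.range (fkBasisFam k))
    rw [mul_c_11 (FKa k) (FKb k) (FKc k) (fk_haa k) (fk_hbb k) (fk_hcc k) (fk_r1 k) (fk_r2 k)]
    exact Submodule.zero_mem _

theorem mul_gen_mem (g : Fin 3) :
    ∀ s ∈ Submodule.span k (Set.range (fkBasisFam k)),
      RingQuot.mkAlgHom k (FKRel k) (ι k g) * s ∈ Submodule.span k (Set.range (fkBasisFam k)) := by
  intro s hs
  induction hs using Submodule.span_induction with
  | mem x hx =>
    obtain ⟨i, rfl⟩ := hx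
    fin_cases g
    · exact mul_a_fam k i
    · exact mul_b_fam k i
    · exact mul_c_fam k i
  | zero => rw [mul_zero]; exact Submodule.zero_mem _
  | add x y _ _ hx hy => rw [mul_add]; exact Submodule.add_mem _ hx hy
  | smul t x _ hx => rw [mul_smul_comm]; exact Submodule.smul_mem _ t hx

theorem span_fam_top : ⊤ ≤ Submodule.span k (Set.range (fkBasisFam k)) := by
  intro x _
  obtain ⟨y, rfl⟩ := RingQuot.mkAlgHom_surjective k (FKRel k) x
  have main : ∀ y : FreeAlgebra k (Fin 3), ∀ s ∈ Submodule.span k (Set.range (fkBasisFam k)),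
      RingQuot.mkAlgHom k (FKRel k) y * s ∈ Submodule.span k (Set.range (fkBasisFam k)) := by
    intro y
    induction y using FreeAlgebra.induction with
    | grade0 r =>
      intro s hs
      rw [AlgHom.commutes, ← Algebra.smul_def]
      exact Submodule.smul_mem _ r hs
    | grade1 i => exact mul_gen_mem k i
    | mul x y hx hy => intro s hs; rw [map_mul, mul_assoc]; exact hx _ (hy s hs)
    | add x y hx hy => intro s hs; rw [map_add, add_mul]; exact Submodule.add_mem _ (hx s hs) (hy s hs)
  have h1 : (1 : FK3 k) ∈ Submodule.span k (Set.range (fkBasisFam k)) := mem_fam k 0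
  simpa using main y 1 h1

/-! ### The 12-dimensional representation, for linear independence -/

def MZa : Matrix (Fin 12) (Fin 12) ℤ :=
  !![0, 0, 0, 0, 0, 0, 0, 0, 0, 0, 0, 0;
    1, 0, 0, 0, 0, 0, 0, 0, 0, 0, 0, 0;
    0, 0, 0, 0, 0, 0, 0, 0, 0, 0, 0, 0;
    0, 0, 0, 0, 0, 0, 0, 0, 0, 0, 0, 0;
    0, 0, 1, 0, 0, 0, 0, 0, 0, 0, 0, 0;
    0, 0, 0, 0, 0, 0, 0, 0, 0, 0, 0, 0;
    0, 0, 0, 0, 0, 0, 0, 0, 0, 0, 0, 0;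
    0, 0, 0, 1, 0, 0, 0, 0, 0, 0, 0, 0;
    0, 0, 0, 0, 0, 0, 1, 0, 0, 0, 0, 0;
    0, 0, 0, 0, 0, 1, 0, 0, 0, 0, 0, 0;
    0, 0, 0, 0, 0, 0, 0, 0, 0, 0, 0, 0;
    0, 0, 0, 0, 0, 0, 0, 0, 0, 0, 1, 0]

def MZb : Matrix (Fin 12) (Fin 12) ℤ :=
  !![0, 0, 0, 0, 0, 0, 0, 0, 0, 0, 0, 0;
    0, 0, 0, 0, 0, 0, 0, 0, 0, 0, 0, 0;
    1, 0, 0, 0, 0, 0, 0, 0, 0, 0, 0, 0;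
    0, 0, 0, 0, 0, 0, 0, 0, 0, 0, 0, 0;
    0, 0, 0, 0, 0, 0, 0, 0, 0, 0, 0, 0;
    0, 0, 0, 1, 0, 0, 0, 0, 0, 0, 0, 0;
    0, 1, 0, 0, 0, 0, 0, 0, 0, 0, 0, 0;
    0, 0, 0, 0, 0, 0, 0, 0, 0, 0, 0, 0;
    0, 0, 0, 0, 1, 0, 0, 0, 0, 0, 0, 0;
    0, 0, 0, 0, 0, 0, 0, 0, 0, 0, 0, 0;
    0, 0, 0, 0, 0, 0, 0, 1, 0, 0, 0, 0;
    0, 0, 0, 0, 0, 0, 0, 0, 0, 1, 0, 0]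

def MZc : Matrix (Fin 12) (Fin 12) ℤ :=
  !![0, 0, 0, 0, 0, 0, 0, 0, 0, 0, 0, 0;
    0, 0, 0, 0, 0, 0, 0, 0, 0, 0, 0, 0;
    0, 0, 0, 0, 0, 0, 0, 0, 0, 0, 0, 0;
    1, 0, 0, 0, 0, 0, 0, 0, 0, 0, 0, 0;
    0, -1, 0, 0, 0, 0, 0, 0, 0, 0, 0, 0;
    0, -1, 0, 0, 0, 0, 0, 0, 0, 0, 0, 0;
    0, 0, -1, 0, 0, 0, 0, 0, 0, 0, 0, 0;
    0, 0, -1, 0, 0, 0, 0, 0, 0, 0, 0, 0;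
    0, 0, 0, 0, 0, 0, 0, 0, 0, 0, 0, 0;
    0, 0, 0, 0, 0, 0, 1, -1, 0, 0, 0, 0;
    0, 0, 0, 0, 1, -1, 0, 0, 0, 0, 0, 0;
    0, 0, 0, 0, 0, 0, 0, 0, -1, 0, 0, 0]

theorem MZ_aa : MZa * MZa = 0 := by decide
theorem MZ_bb : MZb * MZb = 0 := by decide
theorem MZ_cc : MZc * MZc = 0 := by decide
theorem MZ_r1 : MZa * MZb + MZb * MZc + MZc * MZa = 0 := by decide
theorem MZ_r2 : MZb * MZa + MZa * MZc + MZc * MZb = 0 := by decide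

/-- Images of the three generators over `k`. -/
noncomputable def Mka : Matrix (Fin 12) (Fin 12) k := (Int.castRingHom k).mapMatrix MZa
noncomputable def Mkb : Matrix (Fin 12) (Fin 12) k := (Int.castRingHom k).mapMatrix MZb
noncomputable def Mkc : Matrix (Fin 12) (Fin 12) k := (Int.castRingHom k).mapMatrix MZc

/-- The representation of `FK3` on `k^12`. -/
noncomputable def toMat : FK3 k →ₐ[k] Matrix (Fin 12) (Fin 12) k :=
  RingQuot.liftAlgHom k ⟨FreeAlgebra.lift k ![Mka k, Mkb k, Mkc k], by
    rintro x y ⟨⟩ <;>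
      simp only [map_mul, map_add, map_zero, FreeAlgebra.lift_ι_apply, Matrix.cons_val_zero,
        Matrix.cons_val_one, Matrix.head_cons, Matrix.cons_val_two, Matrix.tail_cons, Mka, Mkb, Mkc]
    · simpa [map_mul] using congrArg (Int.castRingHom k).mapMatrix MZ_aa
    · simpa [map_mul] using congrArg (Int.castRingHom k).mapMatrix MZ_bb
    · simpa [map_mul] using congrArg (Int.castRingHom k).mapMatrix MZ_cc
    · simpa [map_mul, map_add] using congrArg (Int.castRingHom k).mapMatrix MZ_r1
    · simpa [map_mul, map_add] using congrArg (Int.castRingHom k).mapMatrix MZ_r2⟩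

theorem toMat_a : toMat k (FKa k) = Mka k := by
  rw [FKa, toMat, RingQuot.liftAlgHom_mkAlgHom_apply]
  simp [FreeAlgebra.lift_ι_apply]
theorem toMat_b : toMat k (FKb k) = Mkb k := by
  rw [FKb, toMat, RingQuot.liftAlgHom_mkAlgHom_apply]
  simp [FreeAlgebra.lift_ι_apply]
theorem toMat_c : toMat k (FKc k) = Mkc k := by
  rw [FKc, toMat, RingQuot.liftAlgHom_mkAlgHom_apply]
  simp [FreeAlgebra.lift_ι_apply, Matrix.cons_val_two, Matrix.tail_cons]

/-- Reading off the `0`-th column. -/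
noncomputable def colZero : Matrix (Fin 12) (Fin 12) k →ₗ[k] (Fin 12 → k) where
  toFun m := fun i => m i 0
  map_add' := fun _ _ => rfl
  map_smul' := fun _ _ => rfl

theorem col_single (M : Matrix (Fin 12) (Fin 12) ℤ) (j : Fin 12)
    (h : ∀ i, M i 0 = if i = j then 1 else 0) :
    (fun i => ((Int.castRingHom k).mapMatrix M) i 0) = (Pi.single j 1 : Fin 12 → k) := by
  funext i
  simp [RingHom.mapMatrix_apply, Matrix.map_apply, h i, Pi.single_apply, apply_ite]

theorem fam_indep : LinearIndependent k (fkBasisFam k) := by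
  apply LinearIndependent.of_comp ((colZero k).comp (toMat k).toLinearMap)
  have key : (⇑((colZero k).comp (toMat k).toLinearMap)) ∘ fkBasisFam k
      = fun j : Fin 12 => (Pi.single j 1 : Fin 12 → k) := by
    funext j
    show (fun i => (toMat k (fkBasisFam k j)) i 0) = Pi.single j 1
    fin_cases j
    · show (fun i => (toMat k (1 : FK3 k)) i 0) = Pi.single 0 1
      rw [map_one]
      have e : (1 : Matrix (Fin 12) (Fin 12) k) = (Int.castRingHom k).mapMatrix 1 := (map_one _).symm
      rw [e]
      exact col_single k _ 0 (by decide)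
    · show (fun i => (toMat k (FKa k)) i 0) = Pi.single 1 1
      have e : toMat k (FKa k) = (Int.castRingHom k).mapMatrix (MZa) := by
        simp only [map_mul, toMat_a, toMat_b, toMat_c, Mka, Mkb, Mkc]
      rw [e]
      exact col_single k _ 1 (by decide)
    · show (fun i => (toMat k (FKb k)) i 0) = Pi.single 2 1
      have e : toMat k (FKb k) = (Int.castRingHom k).mapMatrix (MZb) := by
        simp only [map_mul, toMat_a, toMat_b, toMat_c, Mka, Mkb, Mkc]
      rw [e]
      exact col_single k _ 2 (by decide)
    · show (fun i => (toMat k (FKc k)) i 0) = Pi.single 3 1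
      have e : toMat k (FKc k) = (Int.castRingHom k).mapMatrix (MZc) := by
        simp only [map_mul, toMat_a, toMat_b, toMat_c, Mka, Mkb, Mkc]
      rw [e]
      exact col_single k _ 3 (by decide)
    · show (fun i => (toMat k (FKa k * FKb k)) i 0) = Pi.single 4 1
      have e : toMat k (FKa k * FKb k) = (Int.castRingHom k).mapMatrix (MZa * MZb) := by
        simp only [map_mul, toMat_a, toMat_b, toMat_c, Mka, Mkb, Mkc]
      rw [e]
      exact col_single k _ 4 (by decide)
    · show (fun i => (toMat k (FKb k * FKc k)) i 0) = Pi.single 5 1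
      have e : toMat k (FKb k * FKc k) = (Int.castRingHom k).mapMatrix (MZb * MZc) := by
        simp only [map_mul, toMat_a, toMat_b, toMat_c, Mka, Mkb, Mkc]
      rw [e]
      exact col_single k _ 5 (by decide)
    · show (fun i => (toMat k (FKb k * FKa k)) i 0) = Pi.single 6 1
      have e : toMat k (FKb k * FKa k) = (Int.castRingHom k).mapMatrix (MZb * MZa) := by
        simp only [map_mul, toMat_a, toMat_b, toMat_c, Mka, Mkb, Mkc]
      rw [e]
      exact col_single k _ 6 (by decide)
    · show (fun i => (toMat k (FKa k * FKc k)) i 0) = Pi.single 7 1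
      have e : toMat k (FKa k * FKc k) = (Int.castRingHom k).mapMatrix (MZa * MZc) := by
        simp only [map_mul, toMat_a, toMat_b, toMat_c, Mka, Mkb, Mkc]
      rw [e]
      exact col_single k _ 7 (by decide)
    · show (fun i => (toMat k (FKa k * FKb k * FKa k)) i 0) = Pi.single 8 1
      have e : toMat k (FKa k * FKb k * FKa k) = (Int.castRingHom k).mapMatrix (MZa * MZb * MZa) := by
        simp only [map_mul, toMat_a, toMat_b, toMat_c, Mka, Mkb, Mkc]
      rw [e]
      exact col_single k _ 8 (by decide)
    · show (fun i => (toMat k (FKa k * FKb k * FKc k)) i 0) = Pi.single 9 1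
      have e : toMat k (FKa k * FKb k * FKc k) = (Int.castRingHom k).mapMatrix (MZa * MZb * MZc) := by
        simp only [map_mul, toMat_a, toMat_b, toMat_c, Mka, Mkb, Mkc]
      rw [e]
      exact col_single k _ 9 (by decide)
    · show (fun i => (toMat k (FKb k * FKa k * FKc k)) i 0) = Pi.single 10 1
      have e : toMat k (FKb k * FKa k * FKc k) = (Int.castRingHom k).mapMatrix (MZb * MZa * MZc) := by
        simp only [map_mul, toMat_a, toMat_b, toMat_c, Mka, Mkb, Mkc]
      rw [e]
      exact col_single k _ 10 (by decide)
    · show (fun i => (toMat k (FKa k * FKb k * FKa k * FKc k)) i 0) = Pi.single 11 1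
      have e : toMat k (FKa k * FKb k * FKa k * FKc k) = (Int.castRingHom k).mapMatrix (MZa * MZb * MZa * MZc) := by
        simp only [map_mul, toMat_a, toMat_b, toMat_c, Mka, Mkb, Mkc]
      rw [e]
      exact col_single k _ 11 (by decide)
  rw [key]
  have e : ⇑(Pi.basisFun k (Fin 12)) = fun j : Fin 12 => (Pi.single j 1 : Fin 12 → k) :=
    funext fun j => Pi.basisFun_apply k (Fin 12) j
  rw [← e]
  exact (Pi.basisFun k (Fin 12)).linearIndependent

/-- `FK(3)` has dimension `12` over `k`, with basis
`{1, a, b, c, ab, bc, ba, ac, aba, abc, bac, abac}`. -/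
theorem FK3_finrank_eq_twelve (h2 : ringChar k ≠ 2) (h3 : ringChar k ≠ 3) :
    Module.finrank k (FK3 k) = 12 ∧
      ∃ B : Module.Basis (Fin 12) k (FK3 k), ⇑B = fkBasisFam k := by
  have B : Module.Basis (Fin 12) k (FK3 k) := Module.Basis.mk (fam_indep k) (span_fam_top k)
  refine ⟨?_, Module.Basis.mk (fam_indep k) (span_fam_top k), Module.Basis.coe_mk _ _⟩
  rw [Module.finrank_eq_card_basis (Module.Basis.mk (fam_indep k) (span_fam_top k))]
  simp
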